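/- Let d > 1 and n ≥ 1 be integers and set d_n := ∑_{m | n} μ(n/m)(d^m + 1), the sum ranging over positive divisors m of n, where μ is the Möbius function. Then d_n ≥ (1 − 1/d) d^n, i.e. d · d_n ≥ (d − 1) d^n as integers. -/

import Mathlib

open ArithmeticFunction
open scoped ArithmeticFunction.Moebius

private lemma moebius_sum_zero' {n : ℕ} (hn : 1 < n) :
    ∑ m ∈ n.divisors, (μ (n / m) : ℤ) = 0 := by
  rw [Nat.sum_div_divisors n (fun i => (μ i : ℤ))]
  have := congrArg (fun f : ArithmeticFunction ℤ => f n) moebius_mul_coe_zeta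
  simp only [coe_mul_zeta_apply] at this
  rw [this, one_apply_ne (by omega)]

private lemma proper_div_le_half' {n m : ℕ} (hm : m ∣ n) (hmn : m < n) :
    m ≤ n / 2 := by
  obtain ⟨c, rfl⟩ := hm
  have hc : 2 ≤ c := by
    rcases c with _ | _ | c <;> omega
  have : 2 * m ≤ m * c := by nlinarith
  omega

/-- For integers `d > 1` and `n ≥ 1`, with
`d_n := ∑_{m | n} μ(n/m)(d^m + 1)`, one has `d · d_n ≥ (d − 1) d^n` as integers. -/
theorem stmt7 (d n : ℕ) (hd : 1 < d) (hn : 1 ≤ n) :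
    ((d : ℤ) - 1) * (d : ℤ) ^ n
      ≤ (d : ℤ) * ∑ m ∈ n.divisors, (μ (n / m) : ℤ) * ((d : ℤ) ^ m + 1) := by
  have hd1 : (1 : ℤ) ≤ (d : ℤ) := by exact_mod_cast hd.le
  have hd2 : (2 : ℤ) ≤ (d : ℤ) := by exact_mod_cast hd
  have hdpos : (0 : ℤ) < (d : ℤ) := by linarith
  have hsplit : ∑ m ∈ n.divisors, (μ (n / m) : ℤ) * ((d : ℤ) ^ m + 1)
      = (∑ m ∈ n.divisors, (μ (n / m) : ℤ) * (d : ℤ) ^ m)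
        + ∑ m ∈ n.divisors, (μ (n / m) : ℤ) := by
    rw [← Finset.sum_add_distrib]
    exact Finset.sum_congr rfl fun m _ => by ring
  rcases eq_or_lt_of_le hn with h1 | h1
  · -- n = 1
    subst h1
    simp only [Nat.divisors_one, Finset.sum_singleton, Nat.div_self Nat.one_pos, pow_one,
      moebius_apply_one, Int.cast_one]
    nlinarith
  · -- n ≥ 2
    rw [hsplit, moebius_sum_zero' h1, add_zero]
    have hnmem : n ∈ n.divisors := Nat.mem_divisors_self n (by omega)
    rw [← Finset.add_sum_erase _ _ hnmem, Nat.div_self (by omega), moebius_apply_one]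
    set k := n / 2 with hk
    set S : ℤ := ∑ m ∈ Finset.Icc 1 k, (d : ℤ) ^ m with hS
    -- bound the error term from below
    have hE : -S ≤ ∑ m ∈ (n.divisors).erase n, (μ (n / m) : ℤ) * (d : ℤ) ^ m := by
      have hsub : (n.divisors).erase n ⊆ Finset.Icc 1 k := by
        intro m hm
        rw [Finset.mem_erase, Nat.mem_divisors] at hm
        rw [Finset.mem_Icc]
        refine ⟨Nat.pos_of_dvd_of_pos hm.2.1 (by omega), proper_div_le_half' hm.2.1 ?_⟩
        exact lt_of_le_of_ne (Nat.le_of_dvd (by omega) hm.2.1) hm.1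
      calc -S ≤ -(∑ m ∈ (n.divisors).erase n, (d : ℤ) ^ m) := by
            apply neg_le_neg
            apply Finset.sum_le_sum_of_subset_of_nonneg hsub
            intro i _ _; positivity
        _ ≤ _ := by
            rw [← Finset.sum_neg_distrib]
            apply Finset.sum_le_sum
            intro m _
            have h2 : -1 ≤ (μ (n / m) : ℤ) :=
              (abs_le.mp (abs_moebius_le_one (n := n / m))).1
            nlinarith [pow_pos hdpos m]
    -- geometric bound: d * S ≤ d ^ n
    have hgeom : (d : ℤ) * S ≤ (d : ℤ) ^ n := by
      have hgs : (∑ m ∈ Finset.range (k + 1), (d : ℤ) ^ m) * ((d : ℤ) - 1)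
          = (d : ℤ) ^ (k + 1) - 1 := geom_sum_mul _ _
      have hIcc : S = (∑ m ∈ Finset.range (k + 1), (d : ℤ) ^ m) - 1 := by
        rw [hS, show Finset.Icc 1 k = Finset.Ico 1 (k + 1) from rfl,
          Finset.range_eq_Ico, Finset.sum_Ico_eq_sub _ (by omega)]
        simp
      have hkey : (d : ℤ) ^ (k + 2) + (d : ℤ) ^ n ≤ (d : ℤ) ^ (n + 1) + (d : ℤ) ^ 2 := by
        rcases eq_or_lt_of_le (show 2 ≤ n by omega) with h2 | h2
        · subst h2; norm_num [hk]
        · have hkn : k + 2 ≤ n := by omega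
          have hpow : (d : ℤ) ^ (k + 2) ≤ (d : ℤ) ^ n := pow_le_pow_right₀ hd1 hkn
          have : 2 * (d : ℤ) ^ n ≤ (d : ℤ) ^ (n + 1) := by
            rw [pow_succ, mul_comm]
            exact mul_le_mul_of_nonneg_left hd2 (by positivity)
          nlinarith [pow_pos hdpos 2]
      -- (d-1)*(d*S) = d^{k+2} - d^2
      have hmul : ((d : ℤ) - 1) * ((d : ℤ) * S) = (d : ℤ) ^ (k + 2) - (d : ℤ) ^ 2 := by
        rw [hIcc]
        have : ((d : ℤ) - 1) * ((d : ℤ) * ((∑ m ∈ Finset.range (k + 1), (d : ℤ) ^ m) - 1))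
            = (d : ℤ) * ((∑ m ∈ Finset.range (k + 1), (d : ℤ) ^ m) * ((d : ℤ) - 1))
              - (d : ℤ) * ((d : ℤ) - 1) := by ring
        rw [this, hgs]; ring
      have hfin : ((d : ℤ) - 1) * ((d : ℤ) * S) ≤ ((d : ℤ) - 1) * (d : ℤ) ^ n := by
        rw [hmul]
        have : ((d : ℤ) - 1) * (d : ℤ) ^ n = (d : ℤ) ^ (n + 1) - (d : ℤ) ^ n := by
          rw [pow_succ]; ring
        linarith
      exact le_of_mul_le_mul_left (by linarith [hfin]) (by linarith : (0 : ℤ) < (d : ℤ) - 1)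
    -- combine
    have hEd : (d : ℤ) * (-S) ≤ (d : ℤ) * ∑ m ∈ (n.divisors).erase n, (μ (n / m) : ℤ) * (d : ℤ) ^ m :=
      mul_le_mul_of_nonneg_left hE (by linarith)
    have hpowsucc : (d : ℤ) * (d : ℤ) ^ n = (d : ℤ) ^ (n + 1) := by rw [pow_succ]; ring
    nlinarith [hEd, hgeom]
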